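/- Let N ≥ 3 be a natural number and α > 0 a real number. Define the 2×2 observables A*_{10} = ((N−1)α·σz + σx)/√(1+(N−1)²α²) and A*_{i0} = σx for 2 ≤ i ≤ N, and for an outcome a ∈ Fin 2 and 2×2 observable A let Π_a(A) = (I₂ + (−1)^a A)/2 be the associated projector. Then for every outcome string (a_1,…,a_N) ∈ (Fin 2)^N, the joint outcome probability ⟨GHZ_N, (Π_{a_1}(A*_{10}) ⊗ Π_{a_2}(σx) ⊗ ⋯ ⊗ Π_{a_N}(σx)) GHZ_N⟩ equals 2^{−N}·(1 + (−1)^{a_1+⋯+a_N}/√(1+(N−1)²α²)). In particular the maximum of these probabilities over all outcome strings equals 2^{−N}·(1 + 1/√(1+(N−1)²α²)). -/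

import Mathlib

open Matrix BigOperators Finset

noncomputable section

/-- Tensor product of `N` 2×2 complex matrices, indexed by bit strings `Fin N → Fin 2`. -/
def tensorN (N : ℕ) (M : Fin N → Matrix (Fin 2) (Fin 2) ℂ) :
    Matrix (Fin N → Fin 2) (Fin N → Fin 2) ℂ :=
  Matrix.of fun f g => ∏ i, M i (f i) (g i)

def sigmax : Matrix (Fin 2) (Fin 2) ℂ := !![0, 1; 1, 0]
def sigmaz : Matrix (Fin 2) (Fin 2) ℂ := !![1, 0; 0, -1]

/-- The `N`-qubit GHZ state. -/
def ghz (N : ℕ) : (Fin N → Fin 2) → ℂ := fun f =>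
  if f = (fun _ => 0) then ((Real.sqrt 2 : ℝ) : ℂ)⁻¹
  else if f = (fun _ => 1) then ((Real.sqrt 2 : ℝ) : ℂ)⁻¹ else 0

/-- Projector `Π_a(A) = (I₂ + (−1)^a A)/2` onto the outcome `a` of the observable `A`. -/
def proj (a : Fin 2) (A : Matrix (Fin 2) (Fin 2) ℂ) : Matrix (Fin 2) (Fin 2) ℂ :=
  ((1 : ℂ) / 2) • (1 + ((-1 : ℂ) ^ (a : ℕ)) • A)

/-- The observable `A*₁₀ = ((N−1)α σz + σx)/√(1+(N−1)²α²)`. -/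
def Astar10 (N : ℕ) (α : ℝ) : Matrix (Fin 2) (Fin 2) ℂ :=
  ((Real.sqrt (1 + ((N : ℝ) - 1) ^ 2 * α ^ 2) : ℝ) : ℂ)⁻¹ •
    (((((N : ℝ) - 1) * α : ℝ) : ℂ) • sigmaz + sigmax)

section Aux

lemma projx00 (a : Fin 2) : proj a sigmax 0 0 = 1/2 := by
  simp [proj, sigmax, Matrix.one_apply]
lemma projx11 (a : Fin 2) : proj a sigmax 1 1 = 1/2 := by
  simp [proj, sigmax, Matrix.one_apply]
lemma projx01 (a : Fin 2) : proj a sigmax 0 1 = (-1:ℂ)^(a:ℕ)/2 := by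
  simp [proj, sigmax, Matrix.one_apply]; ring
lemma projx10 (a : Fin 2) : proj a sigmax 1 0 = (-1:ℂ)^(a:ℕ)/2 := by
  simp [proj, sigmax, Matrix.one_apply]; ring

lemma projA00 (N : ℕ) (α : ℝ) (a : Fin 2) :
    proj a (Astar10 N α) 0 0 =
      (1 + (-1:ℂ)^(a:ℕ) * (((Real.sqrt (1 + ((N:ℝ)-1)^2*α^2) :ℝ):ℂ)⁻¹ * ((((N:ℝ)-1)*α :ℝ):ℂ)))/2 := by
  simp [proj, Astar10, sigmax, sigmaz, Matrix.one_apply]; ring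
lemma projA11 (N : ℕ) (α : ℝ) (a : Fin 2) :
    proj a (Astar10 N α) 1 1 =
      (1 - (-1:ℂ)^(a:ℕ) * (((Real.sqrt (1 + ((N:ℝ)-1)^2*α^2) :ℝ):ℂ)⁻¹ * ((((N:ℝ)-1)*α :ℝ):ℂ)))/2 := by
  simp [proj, Astar10, sigmax, sigmaz, Matrix.one_apply]; ring
lemma projA01 (N : ℕ) (α : ℝ) (a : Fin 2) :
    proj a (Astar10 N α) 0 1 =
      (-1:ℂ)^(a:ℕ) * ((Real.sqrt (1 + ((N:ℝ)-1)^2*α^2) :ℝ):ℂ)⁻¹ / 2 := by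
  simp [proj, Astar10, sigmax, sigmaz, Matrix.one_apply]; ring
lemma projA10 (N : ℕ) (α : ℝ) (a : Fin 2) :
    proj a (Astar10 N α) 1 0 =
      (-1:ℂ)^(a:ℕ) * ((Real.sqrt (1 + ((N:ℝ)-1)^2*α^2) :ℝ):ℂ)⁻¹ / 2 := by
  simp [proj, Astar10, sigmax, sigmaz, Matrix.one_apply]; ring

lemma ghz_sum (N : ℕ) (hN : 0 < N) (w : (Fin N → Fin 2) → ℂ) :
    ∑ f, ghz N f * w f
      = ((Real.sqrt 2 : ℝ) : ℂ)⁻¹ * (w (fun _ => 0) + w (fun _ => 1)) := by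
  set z0 : Fin N → Fin 2 := fun _ => 0 with hz0
  set z1 : Fin N → Fin 2 := fun _ => 1 with hz1
  have hne : z0 ≠ z1 := by
    intro h
    have := congrFun h ⟨0, hN⟩
    simp [hz0, hz1] at this
  have h1 : ∑ f, ghz N f * w f = ∑ f ∈ ({z0, z1} : Finset (Fin N → Fin 2)), ghz N f * w f := by
    refine (Finset.sum_subset (Finset.subset_univ _) ?_).symm
    intro x _ hx
    simp only [Finset.mem_insert, Finset.mem_singleton, not_or] at hx
    simp [ghz, show ¬ x = (fun _ => 0) from hx.1, show ¬ x = (fun _ => 1) from hx.2]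
  rw [h1, Finset.sum_pair hne]
  have g0 : ghz N z0 = ((Real.sqrt 2 : ℝ) : ℂ)⁻¹ := by simp only [ghz]; rw [if_pos hz0]
  have g1 : ghz N z1 = ((Real.sqrt 2 : ℝ) : ℂ)⁻¹ := by
    simp only [ghz]; rw [if_neg (show ¬ z1 = (fun _ => 0) from hne.symm), if_pos hz1]
  rw [g0, g1]; ring

lemma star_ghz (N : ℕ) : star (ghz N) = ghz N := by
  funext f
  simp only [Pi.star_apply, ghz]
  split_ifs <;> simp

lemma ghz_quad (N : ℕ) (hN : 0 < N) (M : Matrix (Fin N → Fin 2) (Fin N → Fin 2) ℂ) :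
    star (ghz N) ⬝ᵥ M.mulVec (ghz N)
      = (1/2 : ℂ) * (M (fun _ => 0) (fun _ => 0) + M (fun _ => 0) (fun _ => 1)
          + M (fun _ => 1) (fun _ => 0) + M (fun _ => 1) (fun _ => 1)) := by
  rw [star_ghz]
  have c2 : ((Real.sqrt 2 : ℝ) : ℂ)⁻¹ * ((Real.sqrt 2 : ℝ) : ℂ)⁻¹ = 1/2 := by
    rw [← mul_inv]
    norm_cast
    rw [Real.mul_self_sqrt (by norm_num)]
    push_cast; norm_num
  have hmv : ∀ f, M.mulVec (ghz N) f
      = ((Real.sqrt 2 : ℝ) : ℂ)⁻¹ * (M f (fun _ => 0) + M f (fun _ => 1)) := by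
    intro f
    rw [Matrix.mulVec, dotProduct]
    rw [show (∑ i, M f i * ghz N i) = ∑ i, ghz N i * M f i by simp_rw [mul_comm]]
    exact ghz_sum N hN _
  rw [dotProduct, ghz_sum N hN, hmv, hmv]
  linear_combination ((M (fun _ => 0) (fun _ => 0) + M (fun _ => 0) (fun _ => 1)
          + M (fun _ => 1) (fun _ => 0) + M (fun _ => 1) (fun _ => 1))) * c2

lemma ghz_value (N : ℕ) (hN : 3 ≤ N) (α : ℝ) (a : Fin N → Fin 2) :
    star (ghz N) ⬝ᵥ
        (tensorN N (fun i => if i = (⟨0, lt_of_lt_of_le (by norm_num) hN⟩ : Fin N)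
            then proj (a i) (Astar10 N α) else proj (a i) sigmax)).mulVec (ghz N)
      = (1/2 : ℂ)^N * (1 + (-1:ℂ)^(∑ i, ((a i : ℕ)))
          * ((Real.sqrt (1 + ((N:ℝ)-1)^2*α^2) :ℝ):ℂ)⁻¹) := by
  have hN0 : 0 < N := by omega
  set i0 : Fin N := ⟨0, lt_of_lt_of_le (by norm_num) hN⟩ with hi0
  set t : ℂ := ((Real.sqrt (1 + ((N:ℝ)-1)^2*α^2) :ℝ):ℂ)⁻¹ with ht
  set β : ℂ := ((((N:ℝ)-1)*α :ℝ):ℂ) with hβ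
  set P : Fin N → Matrix (Fin 2) (Fin 2) ℂ :=
    fun i => if i = i0 then proj (a i) (Astar10 N α) else proj (a i) sigmax with hP
  rw [ghz_quad N hN0]
  have hsplit : ∀ x y : Fin 2,
      (∏ i, P i x y) = P i0 x y * ∏ i ∈ Finset.univ.erase i0, proj (a i) sigmax x y := by
    intro x y
    rw [← Finset.mul_prod_erase Finset.univ (fun i => P i x y) (Finset.mem_univ i0)]
    congr 1
    refine Finset.prod_congr rfl fun i hi => ?_
    rw [hP]
    simp only [if_neg (Finset.ne_of_mem_erase hi)]
  have hcard : (Finset.univ.erase i0).card = N - 1 := by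
    rw [Finset.card_erase_of_mem (Finset.mem_univ _), Finset.card_univ, Fintype.card_fin]
  have Pi0 : P i0 = proj (a i0) (Astar10 N α) := by rw [hP]; simp
  set ε1 : ℂ := ∏ i ∈ Finset.univ.erase i0, (-1:ℂ)^((a i : ℕ)) with hε1
  have hε : (-1:ℂ)^((a i0 : ℕ)) * ε1 = (-1:ℂ)^(∑ i, ((a i : ℕ))) := by
    rw [hε1, Finset.mul_prod_erase Finset.univ (fun i => (-1:ℂ)^((a i : ℕ))) (Finset.mem_univ i0)]
    rw [Finset.prod_pow_eq_pow_sum]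
  have hD : ∀ x y : Fin 2, (∀ b : Fin 2, proj b sigmax x y = 1/2) →
      (∏ i ∈ Finset.univ.erase i0, proj (a i) sigmax x y) = (1/2:ℂ)^(N-1) := by
    intro x y h
    rw [Finset.prod_congr rfl (fun i _ => h (a i)), Finset.prod_const, hcard]
  have hO : ∀ x y : Fin 2, (∀ b : Fin 2, proj b sigmax x y = (-1:ℂ)^(b:ℕ)/2) →
      (∏ i ∈ Finset.univ.erase i0, proj (a i) sigmax x y) = ε1 * (1/2:ℂ)^(N-1) := by
    intro x y h
    rw [Finset.prod_congr rfl (fun i _ => h (a i))]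
    rw [show (fun i => (-1:ℂ)^((a i:ℕ))/2) = fun i => (-1:ℂ)^((a i:ℕ)) * (1/2) by
      funext i; ring]
    rw [Finset.prod_mul_distrib, Finset.prod_const, hcard, hε1]
  have e00 : tensorN N P (fun _ => 0) (fun _ => 0) = P i0 0 0 * (1/2:ℂ)^(N-1) := by
    rw [tensorN, Matrix.of_apply, hsplit, hD 0 0 projx00]
  have e11 : tensorN N P (fun _ => 1) (fun _ => 1) = P i0 1 1 * (1/2:ℂ)^(N-1) := by
    rw [tensorN, Matrix.of_apply, hsplit, hD 1 1 projx11]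
  have e01 : tensorN N P (fun _ => 0) (fun _ => 1) = P i0 0 1 * (ε1 * (1/2:ℂ)^(N-1)) := by
    rw [tensorN, Matrix.of_apply, hsplit, hO 0 1 projx01]
  have e10 : tensorN N P (fun _ => 1) (fun _ => 0) = P i0 1 0 * (ε1 * (1/2:ℂ)^(N-1)) := by
    rw [tensorN, Matrix.of_apply, hsplit, hO 1 0 projx10]
  rw [e00, e01, e10, e11, Pi0, projA00, projA01, projA10, projA11]
  rw [← ht, ← hε]
  obtain ⟨m, hm⟩ : ∃ m, N = m + 1 := ⟨N - 1, by omega⟩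
  subst hm
  simp only [Nat.add_sub_cancel]
  ring

end Aux

/-- The joint-outcome (guessing) probabilities for measuring `A*₁₀, σx, …, σx` on the
GHZ state: each outcome string `a` has probability
`2^{−N}(1 + (−1)^{Σ aᵢ}/√(1+(N−1)²α²))`, and the maximal probability is
`2^{−N}(1 + 1/√(1+(N−1)²α²))`. -/
theorem ghz_outcome_probabilities (N : ℕ) (hN : 3 ≤ N) (α : ℝ) (hα : 0 < α) :
    (∀ a : Fin N → Fin 2,
      star (ghz N) ⬝ᵥ
        (tensorN N (fun i => if i = (⟨0, by omega⟩ : Fin N)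
            then proj (a i) (Astar10 N α) else proj (a i) sigmax)).mulVec (ghz N)
      = ((((2 : ℝ) ^ N)⁻¹ * (1 + (-1 : ℝ) ^ (∑ i, ((a i : ℕ)))
            / Real.sqrt (1 + ((N : ℝ) - 1) ^ 2 * α ^ 2)) : ℝ) : ℂ))
    ∧ IsGreatest
        { x : ℝ | ∃ a : Fin N → Fin 2, (x : ℂ) =
            star (ghz N) ⬝ᵥ
              (tensorN N (fun i => if i = (⟨0, by omega⟩ : Fin N)
                  then proj (a i) (Astar10 N α) else proj (a i) sigmax)).mulVec (ghz N) }
        (((2 : ℝ) ^ N)⁻¹ * (1 + 1 / Real.sqrt (1 + ((N : ℝ) - 1) ^ 2 * α ^ 2))) := by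
  have hs : 0 < Real.sqrt (1 + ((N : ℝ) - 1) ^ 2 * α ^ 2) :=
    Real.sqrt_pos.mpr (by positivity)
  have part1 : ∀ a : Fin N → Fin 2,
      star (ghz N) ⬝ᵥ
        (tensorN N (fun i => if i = (⟨0, by omega⟩ : Fin N)
            then proj (a i) (Astar10 N α) else proj (a i) sigmax)).mulVec (ghz N)
      = ((((2 : ℝ) ^ N)⁻¹ * (1 + (-1 : ℝ) ^ (∑ i, ((a i : ℕ)))
            / Real.sqrt (1 + ((N : ℝ) - 1) ^ 2 * α ^ 2)) : ℝ) : ℂ) := by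
    intro a
    rw [ghz_value N hN α a]
    push_cast
    ring_nf
    simp only [one_div]
    ring
  refine ⟨part1, ⟨fun _ => 0, ?_⟩, ?_⟩
  · rw [part1 (fun _ => 0)]
    norm_num
  · rintro x ⟨a, hx⟩
    rw [part1 a] at hx
    have hx' : x = ((2 : ℝ) ^ N)⁻¹ * (1 + (-1 : ℝ) ^ (∑ i, ((a i : ℕ)))
        / Real.sqrt (1 + ((N : ℝ) - 1) ^ 2 * α ^ 2)) := by exact_mod_cast hx
    rw [hx']
    have h1 : ((-1 : ℝ)) ^ (∑ i, ((a i : ℕ))) ≤ 1 := by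
      rcases Nat.even_or_odd (∑ i, ((a i : ℕ))) with h | h
      · rw [h.neg_one_pow]
      · rw [h.neg_one_pow]; norm_num
    gcongr
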